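/- Let π ∈ M_{2n} have difference sequence periodic with period p. Then the number of valid pointer contexts of π is a multiple of (2n−1)/p. -/

import Mathlib

/-- The representative of `x : ZMod n` in `{1, …, n}` (so `0` represents `n`). -/
def repr1 (n : ℕ) (x : ZMod n) : ℕ := if x = 0 then n else x.val

/-- Values of `ZMod n`, embedded into `ZMod (n+1)` via representatives in `{1, …, n}`. -/
def emb (n : ℕ) (x : ZMod n) : ZMod (n + 1) := (repr1 n x : ZMod (n + 1))

/-- `L 0 = 0` and `L i = π(i)` for `i ∈ {1,…,n}`: the listing used to build
the cycle `Y_π = (π(n) π(n−1) … π(1) 0)`. -/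
def listFun (n : ℕ) (π : Equiv.Perm (ZMod n)) : ZMod (n + 1) → ZMod (n + 1) :=
  fun i => if i = 0 then 0 else emb n (π (i.val : ZMod n))

/-- The inverse listing of `listFun`. -/
def listInv (n : ℕ) (π : Equiv.Perm (ZMod n)) : ZMod (n + 1) → ZMod (n + 1) :=
  fun y => if y = 0 then 0 else emb n (π.symm (y.val : ZMod n))

/-- The cycle `Y_π = (π(n) π(n−1) … π(1) 0)` on `{0,1,…,n}`, as a function:
it sends `L(i)` to `L(i-1)`. -/
def Yfun (n : ℕ) (π : Equiv.Perm (ZMod n)) : ZMod (n + 1) → ZMod (n + 1) :=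
  fun y => listFun n π (listInv n π y - 1)

/-- `C_π = Y_π ∘ X_n`, where `X_n` is the cycle `(0 1 2 … n)`, i.e. `x ↦ x + 1`. -/
def Cfun (n : ℕ) (π : Equiv.Perm (ZMod n)) : ZMod (n + 1) → ZMod (n + 1) :=
  fun x => Yfun n π (x + 1)

/-- The strategic pile of `π ∈ S_n`: the set of values appearing strictly after `n` and
strictly before `0` on the cycle of `C_π` containing `0` and `n` (empty if `0` and `n`
lie in different cycles). -/
def strategicPile (n : ℕ) (π : Equiv.Perm (ZMod n)) : Set (ZMod (n + 1)) :=
  {x | ∃ k m : ℕ, 0 < k ∧ k < m ∧ (Cfun n π)^[m] (n : ZMod (n + 1)) = 0 ∧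
      (∀ j, 0 < j → j < m → (Cfun n π)^[j] (n : ZMod (n + 1)) ≠ 0) ∧
      (Cfun n π)^[k] (n : ZMod (n + 1)) = x}

/-- `π ∈ S_n` has maximal strategic pile. -/
def MaxPile (n : ℕ) (π : Equiv.Perm (ZMod n)) : Prop :=
  (Even n ∧ (strategicPile n π).ncard = n - 1) ∨
  (Odd n ∧ (strategicPile n π).ncard = n - 2)

/-- The position (in `{1,…,n}`) of the value `v` in `π`. -/
def idx (n : ℕ) (π : Equiv.Perm (ZMod n)) (v : ZMod n) : ℕ := repr1 n (π.symm v)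

/-- Word coordinate of the occurrence of the pointer `(p,p+1)` as the right pointer of the
entry `p`:  the entry at position `i` is given word coordinate `3*i - 1`, its left pointer
coordinate `3*i - 2` and its right pointer coordinate `3*i`. -/
def posR (n : ℕ) (π : Equiv.Perm (ZMod n)) (p : ZMod n) : ℕ := 3 * idx n π p

/-- Word coordinate of the occurrence of the pointer `(p,p+1)` as the left pointer of the
entry `p+1`. -/
def posL (n : ℕ) (π : Equiv.Perm (ZMod n)) (p : ZMod n) : ℕ := 3 * idx n π (p + 1) - 2

/-- Two pairs of positions interleave (pattern `a b a b` or `b a b a`). -/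
def Interleaved (a1 a2 b1 b2 : ℕ) : Prop :=
  (min a1 a2 < min b1 b2 ∧ min b1 b2 < max a1 a2 ∧ max a1 a2 < max b1 b2) ∨
  (min b1 b2 < min a1 a2 ∧ min a1 a2 < max b1 b2 ∧ max b1 b2 < max a1 a2)

/-- `(p, q)` is a valid pointer context for `π`: the two pointers are distinct and their
occurrences in the pointer word of `π` appear in the order `p,q,p,q` or `q,p,q,p`. -/
def ValidContext (n : ℕ) (π : Equiv.Perm (ZMod n)) (p q : ZMod n) : Prop :=
  p ≠ q ∧ Interleaved (posR n π p) (posL n π p) (posR n π q) (posL n π q)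

/-- The number of (unordered) valid pointer contexts of `π`. -/
noncomputable def numContexts (n : ℕ) (π : Equiv.Perm (ZMod n)) : ℕ :=
  {pq : ZMod n × ZMod n | ValidContext n π pq.1 pq.2}.ncard / 2

/-- `ρ ∈ S_{2n−1}` is the contraction of `π ∈ S_{2n}`, obtained by deleting the entry `2n`. -/
def IsContraction (n : ℕ) (ρ : Equiv.Perm (ZMod (2 * n - 1)))
    (π : Equiv.Perm (ZMod (2 * n))) : Prop :=
  ∃ m : ℕ, 1 ≤ m ∧ m ≤ 2 * n ∧ π (m : ZMod (2 * n)) = ((2 * n : ℕ) : ZMod (2 * n)) ∧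
    (∀ k : ℕ, 1 ≤ k → k < m →
      ρ (k : ZMod (2 * n - 1)) =
        ((repr1 (2 * n) (π (k : ZMod (2 * n))) : ℕ) : ZMod (2 * n - 1))) ∧
    (∀ k : ℕ, m ≤ k → k ≤ 2 * n - 1 →
      ρ (k : ZMod (2 * n - 1)) =
        ((repr1 (2 * n) (π ((k + 1 : ℕ) : ZMod (2 * n))) : ℕ) : ZMod (2 * n - 1)))

/-- `M_{2n}`: the contractions of permutations in `S_{2n}` with maximal strategic pile. -/
def MsetAll (n : ℕ) : Set (Equiv.Perm (ZMod (2 * n - 1))) :=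
  {ρ | ∃ π : Equiv.Perm (ZMod (2 * n)), MaxPile (2 * n) π ∧ IsContraction n ρ π}

/-- `M_{2n,k}`: the contractions of permutations in `S_{2n}` with maximal strategic pile
and exactly `k` valid pointer contexts. -/
def Mset (n k : ℕ) : Set (Equiv.Perm (ZMod (2 * n - 1))) :=
  {ρ | ρ ∈ MsetAll n ∧ numContexts (2 * n - 1) ρ = k}

/-- Cyclic shift by `a`: `C_a(π)(x) = π(x - a)`. -/
def Cshift (n : ℕ) (a : ZMod n) (π : Equiv.Perm (ZMod n)) : Equiv.Perm (ZMod n) :=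
  (Equiv.subRight a).trans π

/-- Translation by `b`: `T_b(π)(x) = π(x) + b`. -/
def Tshift (n : ℕ) (b : ZMod n) (π : Equiv.Perm (ZMod n)) : Equiv.Perm (ZMod n) :=
  π.trans (Equiv.addRight b)

/-- `φ(a,b,π) = C_a(T_b(π))`, i.e. `x ↦ π(x-a) + b`. -/
def phiAct (n : ℕ) (a b : ZMod n) (π : Equiv.Perm (ZMod n)) : Equiv.Perm (ZMod n) :=
  Cshift n a (Tshift n b π)

/-- The difference sequence of `π`. -/
def Dseq (n : ℕ) (π : Equiv.Perm (ZMod n)) : ZMod n → ZMod n :=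
  fun k => π (k + 1) - π k

/-- The difference sequence of `π` is periodic with (least) period `p`, `0 < p < n`. -/
def PeriodicWith (n : ℕ) (π : Equiv.Perm (ZMod n)) (p : ℕ) : Prop :=
  0 < p ∧ p < n ∧ (∀ k : ZMod n, Dseq n π (k + (p : ZMod n)) = Dseq n π k) ∧
    ∀ q : ℕ, 0 < q → q < p → ¬ ∀ k : ZMod n, Dseq n π (k + (q : ZMod n)) = Dseq n π k


/-! ### Auxiliary machinery for the proof -/

section StmtAux

/-- Cyclic distance from `x` to `y` (positions in `{1,…,L}`). -/
def dltAux (L x y : ℕ) : ℕ := (y + L - x) % L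

/-- `b` lies strictly inside the clockwise arc from `a1` to `a2`. -/
def ArcAux (L a1 a2 b : ℕ) : Prop := 0 < dltAux L a1 b ∧ dltAux L a1 b < dltAux L a1 a2

/-- The chords `{a1,a2}` and `{b1,b2}` cross on the circle of circumference `L`. -/
def CrossAux (L a1 a2 b1 b2 : ℕ) : Prop :=
  (ArcAux L a1 a2 b1 ∧ ¬ ArcAux L a1 a2 b2) ∨ (¬ ArcAux L a1 a2 b1 ∧ ArcAux L a1 a2 b2)

lemma mod_two_aux {m L : ℕ} (h : m < 2*L) (h0 : 0 < L) :
    m % L = m ∧ m < L ∨ m % L = m - L ∧ L ≤ m := by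
  rcases Nat.lt_or_ge m L with h1 | h1
  · exact Or.inl ⟨Nat.mod_eq_of_lt h1, h1⟩
  · exact Or.inr ⟨by rw [Nat.mod_eq_sub_mod h1, Nat.mod_eq_of_lt (by omega)], h1⟩

lemma dltAux_fact {L x y : ℕ} (hx1 : 1 ≤ x) (hx2 : x ≤ L) (hy1 : 1 ≤ y) (hy2 : y ≤ L) :
    dltAux L x y = y + L - x ∧ y + L - x < L ∨ dltAux L x y = y - x ∧ L ≤ y + L - x := by
  have := mod_two_aux (m := y + L - x) (L := L) (by omega) (by omega)
  unfold dltAux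
  omega

lemma dltAux_rot {L c x y : ℕ} (hc : c < L) (hx1 : 1 ≤ x) (hx2 : x ≤ L)
    (hy1 : 1 ≤ y) (hy2 : y ≤ L) :
    dltAux L ((x-1+c)%L+1) ((y-1+c)%L+1) = dltAux L x y := by
  have h0 : 0 < L := by omega
  have hx := mod_two_aux (m := x-1+c) (L := L) (by omega) h0
  have hy := mod_two_aux (m := y-1+c) (L := L) (by omega) h0
  have h1 := dltAux_fact (L := L) (x := (x-1+c)%L+1) (y := (y-1+c)%L+1)
    (by omega) (by omega) (by omega) (by omega)
  have h2 := dltAux_fact hx1 hx2 hy1 hy2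
  omega

lemma interleaved_iff_cross {L a1 a2 b1 b2 : ℕ}
    (h1 : 1 ≤ a1) (h1' : a1 ≤ L) (h2 : 1 ≤ a2) (h2' : a2 ≤ L)
    (h3 : 1 ≤ b1) (h3' : b1 ≤ L) (h4 : 1 ≤ b2) (h4' : b2 ≤ L)
    (d12 : a1 ≠ a2) (d13 : a1 ≠ b1) (d14 : a1 ≠ b2) (d23 : a2 ≠ b1) (d24 : a2 ≠ b2)
    (d34 : b1 ≠ b2) :
    Interleaved a1 a2 b1 b2 ↔ CrossAux L a1 a2 b1 b2 := by
  have e1 := dltAux_fact (L := L) h1 h1' h2 h2'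
  have e2 := dltAux_fact (L := L) h1 h1' h3 h3'
  have e3 := dltAux_fact (L := L) h1 h1' h4 h4'
  unfold Interleaved CrossAux ArcAux
  omega

lemma interleaved_rot {L c a1 a2 b1 b2 : ℕ} (hc : c < L)
    (h1 : 1 ≤ a1) (h1' : a1 ≤ L) (h2 : 1 ≤ a2) (h2' : a2 ≤ L)
    (h3 : 1 ≤ b1) (h3' : b1 ≤ L) (h4 : 1 ≤ b2) (h4' : b2 ≤ L)
    (d12 : a1 ≠ a2) (d13 : a1 ≠ b1) (d14 : a1 ≠ b2) (d23 : a2 ≠ b1) (d24 : a2 ≠ b2)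
    (d34 : b1 ≠ b2) :
    Interleaved ((a1-1+c)%L+1) ((a2-1+c)%L+1) ((b1-1+c)%L+1) ((b2-1+c)%L+1) ↔
      Interleaved a1 a2 b1 b2 := by
  have h0 : 0 < L := by omega
  have m1 := mod_two_aux (m := a1-1+c) (L := L) (by omega) h0
  have m2 := mod_two_aux (m := a2-1+c) (L := L) (by omega) h0
  have m3 := mod_two_aux (m := b1-1+c) (L := L) (by omega) h0
  have m4 := mod_two_aux (m := b2-1+c) (L := L) (by omega) h0
  rw [interleaved_iff_cross (L := L) (by omega) (by omega) (by omega) (by omega)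
      (by omega) (by omega) (by omega) (by omega)
      (by omega) (by omega) (by omega) (by omega) (by omega) (by omega),
    interleaved_iff_cross (L := L) h1 h1' h2 h2' h3 h3' h4 h4' d12 d13 d14 d23 d24 d34]
  unfold CrossAux ArcAux
  rw [dltAux_rot hc h1 h1' h2 h2', dltAux_rot hc h1 h1' h3 h3', dltAux_rot hc h1 h1' h4 h4']

lemma arith_posR {i pp N : ℕ} (hi : 1 ≤ i) (hN : 0 < N) :
    3*((i-1+pp)%N+1) = (3*i-1+3*pp)%(3*N)+1 := by
  have h := Nat.mul_mod_mul_left 3 (i-1+pp) N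
  have hr : (i-1+pp) % N < N := Nat.mod_lt _ hN
  have e1 : 3*i-1+3*pp = 3*(i-1+pp)+2 := by omega
  rw [e1]
  have e2 : 3*(i-1+pp)+2 = 3*N*(3*(i-1+pp)/(3*N)) + (3*(i-1+pp) % (3*N) + 2) := by
    have := Nat.div_add_mod (3*(i-1+pp)) (3*N)
    omega
  have e3 : (3*(i-1+pp) % (3*N) + 2) % (3*N) = 3*(i-1+pp) % (3*N) + 2 :=
    Nat.mod_eq_of_lt (by omega)
  rw [e2, Nat.mul_add_mod, e3]
  omega

lemma arith_posL {j pp N : ℕ} (hj : 1 ≤ j) (hN : 0 < N) :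
    3*((j-1+pp)%N+1) - 2 = (3*j-2-1+3*pp)%(3*N)+1 := by
  have h := Nat.mul_mod_mul_left 3 (j-1+pp) N
  have hr : (j-1+pp) % N < N := Nat.mod_lt _ hN
  have e1 : 3*j-2-1+3*pp = 3*(j-1+pp) := by omega
  rw [e1]
  omega

lemma even_card_of_invol {α : Type*} [DecidableEq α] (T : Finset α) (f : α → α)
    (hmem : ∀ x ∈ T, f x ∈ T) (hinv : ∀ x ∈ T, f (f x) = x) (hne : ∀ x ∈ T, f x ≠ x) :
    Even T.card := by
  induction T using Finset.strongInduction with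
  | _ T ih =>
    rcases T.eq_empty_or_nonempty with rfl | ⟨x, hx⟩
    · simp
    · have hfx : f x ∈ T := hmem x hx
      have hxfx : f x ≠ x := hne x hx
      set T' := (T.erase x).erase (f x) with hT'
      have hsub : T' ⊂ T := by
        refine Finset.ssubset_iff_of_subset ?_ |>.mpr ⟨x, hx, ?_⟩
        · exact (Finset.erase_subset _ _).trans (Finset.erase_subset _ _)
        · simp [hT']
      have hmem' : ∀ y ∈ T', y ∈ T ∧ y ≠ x ∧ y ≠ f x := by
        intro y hy
        simp only [hT', Finset.mem_erase] at hy
        exact ⟨hy.2.2, hy.2.1, hy.1⟩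
      have hfx' : f x ∈ T.erase x := by simp [Finset.mem_erase, hfx, hxfx]
      have hcard : T.card = T'.card + 2 := by
        have c1 : T'.card = (T.erase x).card - 1 := Finset.card_erase_of_mem hfx'
        have c2 : (T.erase x).card = T.card - 1 := Finset.card_erase_of_mem hx
        have c3 : 0 < (T.erase x).card := Finset.card_pos.mpr ⟨f x, hfx'⟩
        have c4 : 0 < T.card := Finset.card_pos.mpr ⟨x, hx⟩
        omega
      have heven : Even T'.card := by
        refine ih T' hsub (fun y hy => ?_) (fun y hy => hinv y (hmem' y hy).1)
          (fun y hy => hne y (hmem' y hy).1)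
        obtain ⟨hyT, hyx, hyfx⟩ := hmem' y hy
        have h1 : f y ∈ T := hmem y hyT
        have h2 : f y ≠ f x := fun h => hyx (by
          have := congrArg f h
          rwa [hinv y hyT, hinv x hx] at this)
        have h3 : f y ≠ x := fun h => hyfx (by
          have := congrArg f h
          rwa [hinv y hyT] at this)
        simp [hT', Finset.mem_erase, h1, h2, h3]
      rw [hcard]
      exact heven.add (Even.add_self 1)

end StmtAux


section StmtAux2

variable {N : ℕ} [NeZero N]

lemma cast_repr1 (x : ZMod N) : ((repr1 N x : ℕ) : ZMod N) = x := by
  unfold repr1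
  split
  · next h => rw [ZMod.natCast_self]; exact h.symm
  · exact ZMod.natCast_rightInverse x

lemma one_le_repr1 (x : ZMod N) : 1 ≤ repr1 N x := by
  unfold repr1
  split
  · exact NeZero.pos N
  · next h => exact Nat.pos_of_ne_zero fun h0 => h ((ZMod.val_eq_zero x).mp h0)

lemma repr1_le (x : ZMod N) : repr1 N x ≤ N := by
  unfold repr1
  split
  · exact le_refl N
  · exact le_of_lt (ZMod.val_lt x)

lemma repr1_inj {x y : ZMod N} (h : repr1 N x = repr1 N y) : x = y := by
  have h2 := congrArg (fun t : ℕ => (t : ZMod N)) h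
  simpa [cast_repr1] using h2

lemma nat_eq_of_cast_eq {A B : ℕ} (hA1 : 1 ≤ A) (hA : A ≤ N) (hB1 : 1 ≤ B) (hB : B ≤ N)
    (h : (A : ZMod N) = (B : ZMod N)) : A = B := by
  rw [ZMod.natCast_eq_natCast_iff'] at h
  have h0 : 0 < N := NeZero.pos N
  have h1 := mod_two_aux (m := A) (L := N) (by omega) h0
  have h2 := mod_two_aux (m := B) (L := N) (by omega) h0
  omega

lemma repr1_shift (x : ZMod N) (c : ℕ) :
    repr1 N (x + (c : ZMod N)) = (repr1 N x - 1 + c) % N + 1 := by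
  have h0 : 0 < N := NeZero.pos N
  apply nat_eq_of_cast_eq (one_le_repr1 _) (repr1_le _) (by omega)
    (by have := Nat.mod_lt (repr1 N x - 1 + c) h0; omega)
  rw [cast_repr1]
  push_cast [ZMod.natCast_mod]
  rw [Nat.cast_sub (one_le_repr1 x), cast_repr1]
  push_cast
  ring

end StmtAux2

lemma key_dvd (N pp : ℕ) (hodd : Odd N) (π : Equiv.Perm (ZMod N))
    (hper : PeriodicWith N π pp) : (N / pp) ∣ numContexts N π := by
  classical
  obtain ⟨hp0, hpN, hper3, hmin⟩ := hper
  have hN2 : 2 ≤ N := by omega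
  haveI : NeZero N := ⟨by omega⟩
  set pz : ZMod N := (pp : ZMod N) with hpz
  have hstep : ∀ k : ZMod N, π (k + pz + 1) - π (k + pz) = π (k + 1) - π k :=
    fun k => hper3 k
  set s : ZMod N := π pz - π 0 with hs
  have g0 : ∀ m : ℕ, π ((m : ZMod N) + pz) - π ((m : ZMod N)) = s := by
    intro m
    induction m with
    | zero =>
      push_cast
      rw [zero_add, hs]
    | succ m ih =>
      push_cast
      rw [add_right_comm ((m : ZMod N)) 1 pz]
      have h2 := hstep ((m : ZMod N))
      linear_combination h2 + ih
  have H1 : ∀ k, π (k + pz) = π k + s := by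
    intro k
    have hk : ((k.val : ℕ) : ZMod N) = k := ZMod.natCast_rightInverse k
    have h := g0 k.val
    rw [hk] at h
    exact eq_add_of_sub_eq' h
  have HT : ∀ (t : ℕ) (k : ZMod N), π (k + t • pz) = π k + t • s := by
    intro t
    induction t with
    | zero => simp
    | succ t ih =>
      intro k
      rw [succ_nsmul, ← add_assoc, H1, ih, succ_nsmul, add_assoc]
  have K1 : ∀ (t : ℕ) (k : ZMod N), Dseq N π (k + t • pz) = Dseq N π k := by
    intro t
    induction t with
    | zero => simp
    | succ t ih =>
      intro k
      rw [succ_nsmul, ← add_assoc, hper3, ih]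
  have hdvdpN : pp ∣ N := by
    have hbez : ((Nat.gcd pp N : ℕ) : ZMod N) = ((Nat.gcdA pp N : ℤ) : ZMod N) * pz := by
      have h := congrArg (fun z : ℤ => ((z : ZMod N))) (Nat.gcd_eq_gcd_ab pp N)
      push_cast at h
      rw [ZMod.natCast_self, zero_mul, add_zero] at h
      rw [h, mul_comm]
    have hgper : ∀ k : ZMod N, Dseq N π (k + ((Nat.gcd pp N : ℕ) : ZMod N)) = Dseq N π k := by
      intro k
      set a : ZMod N := ((Nat.gcdA pp N : ℤ) : ZMod N) with ha
      have h2 : ((Nat.gcd pp N : ℕ) : ZMod N) = a.val • pz := by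
        rw [hbez, nsmul_eq_mul, ZMod.natCast_rightInverse a]
      rw [h2]
      exact K1 a.val k
    have hg1 : 0 < Nat.gcd pp N := Nat.gcd_pos_of_pos_left N hp0
    have hg2 : Nat.gcd pp N ≤ pp := Nat.le_of_dvd hp0 (Nat.gcd_dvd_left pp N)
    have hgeq : Nat.gcd pp N = pp := by
      by_contra hne
      exact hmin _ hg1 (lt_of_le_of_ne hg2 hne) hgper
    exact hgeq ▸ Nat.gcd_dvd_right pp N
  set d := N / pp with hdd
  have hNd : pp * d = N := Nat.mul_div_cancel' hdvdpN
  have hd0 : 0 < d := Nat.div_pos (le_of_lt hpN) hp0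
  have hsm : ∀ t : ℕ, t • pz = ((t * pp : ℕ) : ZMod N) := by
    intro t
    rw [nsmul_eq_mul, hpz]
    push_cast
    ring
  have hds : d • s = 0 := by
    have h := HT d 0
    rw [hsm d] at h
    have hz0 : ((d * pp : ℕ) : ZMod N) = 0 := by
      have he : d * pp = N := by rw [Nat.mul_comm d pp]; exact hNd
      rw [he, ZMod.natCast_self]
    rw [hz0, add_zero] at h
    exact (left_eq_add.mp h)
  have horder : ∀ t : ℕ, t • s = 0 → d ∣ t := by
    intro t ht
    have h := HT t 0
    rw [ht, add_zero] at h
    have h2 : (0 : ZMod N) + t • pz = 0 := π.injective h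
    rw [zero_add, hsm] at h2
    have h3 : N ∣ t * pp := (ZMod.natCast_eq_zero_iff _ N).mp h2
    have h4 : pp * d ∣ pp * t := by
      rw [hNd]
      rwa [mul_comm] at h3
    exact (Nat.mul_dvd_mul_iff_left hp0).mp h4
  have Hsymm : ∀ v, π.symm (v + s) = π.symm v + pz := by
    intro v
    apply π.injective
    rw [Equiv.apply_symm_apply, H1, Equiv.apply_symm_apply]
  have hidx : ∀ v, idx N π (v + s) = (idx N π v - 1 + pp) % N + 1 := by
    intro v
    unfold idx
    rw [Hsymm, hpz]
    exact repr1_shift (π.symm v) pp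
  have hidx1 : ∀ v, 1 ≤ idx N π v := fun v => one_le_repr1 _
  have hidxN : ∀ v, idx N π v ≤ N := fun v => repr1_le _
  have hidxinj : ∀ {a b : ZMod N}, idx N π a = idx N π b → a = b := by
    intro a b h
    exact π.symm.injective (repr1_inj h)
  have hposR : ∀ v, posR N π (v + s) = (posR N π v - 1 + 3*pp) % (3*N) + 1 := by
    intro v
    unfold posR
    rw [hidx v]
    exact arith_posR (hidx1 v) (by omega)
  have hposL : ∀ v, posL N π (v + s) = (posL N π v - 1 + 3*pp) % (3*N) + 1 := by
    intro v
    unfold posL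
    rw [add_right_comm v s 1, hidx (v+1)]
    exact arith_posL (hidx1 (v+1)) (by omega)
  have hI : ∀ a b : ZMod N, a ≠ b →
      (Interleaved (posR N π (a+s)) (posL N π (a+s)) (posR N π (b+s)) (posL N π (b+s)) ↔
        Interleaved (posR N π a) (posL N π a) (posR N π b) (posL N π b)) := by
    intro a b hab
    rw [hposR a, hposL a, hposR b, hposL b]
    have e1 := hidx1 a; have e1' := hidxN a
    have e2 := hidx1 (a+1); have e2' := hidxN (a+1)
    have e3 := hidx1 b; have e3' := hidxN b
    have e4 := hidx1 (b+1); have e4' := hidxN (b+1)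
    have hab1 : idx N π a ≠ idx N π b := fun h => hab (hidxinj h)
    have hab2 : idx N π (a+1) ≠ idx N π (b+1) := fun h => hab (by
      have h2 := hidxinj h
      exact (add_left_inj 1).mp h2)
    unfold posR posL
    apply interleaved_rot <;> omega
  have hvc : ∀ a b : ZMod N, ValidContext N π a b ↔ ValidContext N π (a + s) (b + s) := by
    intro a b
    unfold ValidContext
    constructor
    · rintro ⟨hab, hint⟩
      refine ⟨fun h => hab ((add_left_inj s).mp h), ?_⟩
      exact (hI a b hab).mpr hint
    · rintro ⟨hab, hint⟩
      have hab' : a ≠ b := fun h => hab (by rw [h])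
      exact ⟨hab', (hI a b hab').mp hint⟩
  set S : Set (ZMod N × ZMod N) := {pq | ValidContext N π pq.1 pq.2} with hS
  have hnum : numContexts N π = S.ncard / 2 := by
    rw [hS]
    rfl
  have hSinv : ∀ x : ZMod N × ZMod N, x ∈ S ↔ x + (s, s) ∈ S := by
    intro x
    exact hvc x.1 x.2
  have hzinv : ∀ (z : ℤ) (x : ZMod N × ZMod N), x ∈ S ↔ x + z • (s, s) ∈ S := by
    intro z
    induction z using Int.induction_on with
    | zero => intro x; simp
    | succ n ih =>
      intro x
      have he : x + ((n : ℤ) + 1) • (s, s) = (x + (n : ℤ) • (s, s)) + (s, s) := by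
        rw [add_zsmul, one_zsmul, ← add_assoc]
      rw [he, ← hSinv]
      exact ih x
    | pred n ih =>
      intro x
      have he : x + (-(n : ℤ) - 1) • (s, s) = (x + (-(n : ℤ)) • (s, s)) - (s, s) := by
        rw [sub_zsmul, one_zsmul]
        abel
      rw [he]
      have h2 := hSinv (x + (-(n : ℤ)) • (s, s) - (s, s))
      rw [sub_add_cancel] at h2
      rw [h2]
      exact ih x
  set H : AddSubgroup (ZMod N × ZMod N) := AddSubgroup.zmultiples (s, s) with hH
  have hpre : S = QuotientAddGroup.mk ⁻¹'
      ((QuotientAddGroup.mk : ZMod N × ZMod N → (ZMod N × ZMod N) ⧸ H) '' S) := by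
    ext x
    constructor
    · intro hx
      exact ⟨x, hx, rfl⟩
    · rintro ⟨y, hy, hxy⟩
      have h1 : -y + x ∈ H := (QuotientAddGroup.eq).mp hxy
      obtain ⟨z, hz2⟩ := (AddSubgroup.mem_zmultiples_iff).mp h1
      have h3 : y + z • ((s, s) : ZMod N × ZMod N) = x := by
        rw [hz2]
        exact add_neg_cancel_left y x
      rw [← h3]
      exact (hzinv z y).mp hy
  have hss : ∀ t : ℕ, t • ((s, s) : ZMod N × ZMod N) = (t • s, t • s) := by
    intro t
    induction t with
    | zero => simp; rfl
    | succ t ih => rw [succ_nsmul, succ_nsmul, ih]; rfl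
  have hcardH : Nat.card H = d := by
    rw [hH, Nat.card_zmultiples]
    have h1 : d • ((s, s) : ZMod N × ZMod N) = 0 := by
      rw [hss, hds]
      rfl
    have h2 : ∀ t : ℕ, t • ((s, s) : ZMod N × ZMod N) = 0 → d ∣ t := by
      intro t ht
      rw [hss] at ht
      have h3 : t • s = 0 := by simpa using congrArg Prod.fst ht
      exact horder t h3
    exact Nat.dvd_antisymm (addOrderOf_dvd_of_nsmul_eq_zero h1) (h2 _ (addOrderOf_nsmul_eq_zero _))
  have hdvdcard : d ∣ S.ncard := by
    have hc := Nat.card_congr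
      (QuotientAddGroup.preimageMkEquivAddSubgroupProdSet H (QuotientAddGroup.mk '' S))
    rw [Nat.card_prod, hcardH] at hc
    rw [← Nat.card_coe_set_eq, hpre, hc]
    exact dvd_mul_right d _
  have hfin : S.Finite := Set.toFinite S
  have heven : Even S.ncard := by
    rw [Set.ncard_eq_toFinset_card S hfin]
    apply even_card_of_invol _ Prod.swap
    · intro x hx
      rw [Set.Finite.mem_toFinset] at hx ⊢
      have hx' : ValidContext N π x.1 x.2 := hx
      show ValidContext N π (Prod.swap x).1 (Prod.swap x).2
      unfold ValidContext at hx' ⊢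
      refine ⟨hx'.1.symm, ?_⟩
      have h2 := hx'.2
      unfold Interleaved at h2 ⊢
      exact Or.symm h2
    · intro x _
      exact Prod.swap_swap x
    · intro x hx
      rw [Set.Finite.mem_toFinset] at hx
      intro h
      have hx' : ValidContext N π x.1 x.2 := hx
      have h2 : x.2 = x.1 := congrArg Prod.fst h
      exact hx'.1 h2.symm
  obtain ⟨m, hm⟩ := heven
  have hdodd : Odd d := by
    have ho : Odd (pp * d) := hNd.symm ▸ hodd
    exact (Nat.odd_mul.mp ho).2
  have hddvd2 : d ∣ 2 * m := by
    rw [show 2 * m = S.ncard by omega]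
    exact hdvdcard
  have hdm : d ∣ m := Nat.Coprime.dvd_of_dvd_mul_left (Nat.coprime_two_right.mpr hdodd) hddvd2
  rw [hnum, hm, show (m + m) / 2 = m by omega]
  exact hdm

/-- Let `π ∈ M_{2n}` have difference sequence periodic with period `p`.
Then the number of valid pointer contexts of `π` is a multiple of `(2n-1)/p`. -/
theorem stmt14 (n p : ℕ) (hn : 0 < n) (π : Equiv.Perm (ZMod (2 * n - 1)))
    (hπ : π ∈ MsetAll n) (hper : PeriodicWith (2 * n - 1) π p) :
    ((2 * n - 1) / p) ∣ numContexts (2 * n - 1) π := by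
  have hodd : Odd (2 * n - 1) := ⟨n - 1, by omega⟩
  exact key_dvd (2 * n - 1) p hodd π hper
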